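/- Let R be the algebraic curvature tensor on ℝ⁴ = ℝ² × ℝ² given by the product of two 2-dimensional constant-curvature pieces with Gaussian curvatures c and −c (c ≠ 0): the only nonzero components up to symmetries are R_{1212} = c and R_{3434} = −c. Then R is not Einstein (its Ricci tensor is not a multiple of the identity), but R is weakly Einstein: ∑_{a,b,c} R_{abci} R_{abcj} = (1/4)|R|² δ_{ij} for all i, j. -/
import Mathlib


/-- Ricci tensor of an algebraic curvature tensor, `ρ i j = ∑ a, R a i j a`
(sign convention so that ρ is the usual Ricci contraction). -/
def Ric {n : ℕ} (R : Fin n → Fin n → Fin n → Fin n → ℝ) (i j : Fin n) : ℝ :=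
  ∑ a, R a i j a

/-- Scalar curvature `τ = ∑ i, ρ i i`. -/
def scalCurv {n : ℕ} (R : Fin n → Fin n → Fin n → Fin n → ℝ) : ℝ :=
  ∑ i, Ric R i i

/-- Squared norm of the curvature tensor, `|R|² = ∑ R_{ijkl}²`. -/
def normR2 {n : ℕ} (R : Fin n → Fin n → Fin n → Fin n → ℝ) : ℝ :=
  ∑ i, ∑ j, ∑ k, ∑ l, (R i j k l) ^ 2

/-- Squared norm of the Ricci tensor, `|ρ|² = ∑ ρ_{ij}²`. -/
def normRic2 {n : ℕ} (R : Fin n → Fin n → Fin n → Fin n → ℝ) : ℝ :=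
  ∑ i, ∑ j, (Ric R i j) ^ 2

/-- `R` is an algebraic curvature tensor: antisymmetry in the first and last pairs,
pair-interchange symmetry, and the first Bianchi identity. -/
def IsACT {n : ℕ} (R : Fin n → Fin n → Fin n → Fin n → ℝ) : Prop :=
  (∀ i j k l, R i j k l = - R j i k l) ∧
  (∀ i j k l, R i j k l = - R i j l k) ∧
  (∀ i j k l, R i j k l = R k l i j) ∧
  (∀ i j k l, R i j k l + R j k i l + R k i j l = 0)

/-- Kronecker delta. -/
def kron {n : ℕ} (i j : Fin n) : ℝ := if i = j then 1 else 0

/-- The curvature tensor of the product `M₁²(c) × M₂²(-c)` of two surfaces of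
constant Gaussian curvatures `c` and `-c`: the only nonzero components up to
symmetries are `R 0 1 0 1 = c` and `R 2 3 2 3 = -c`. -/
def prodCurv (c : ℝ) (i j k l : Fin 4) : ℝ :=
  c * (kron i 0 * kron j 1 - kron i 1 * kron j 0) *
      (kron k 0 * kron l 1 - kron k 1 * kron l 0)
    - c * (kron i 2 * kron j 3 - kron i 3 * kron j 2) *
      (kron k 2 * kron l 3 - kron k 3 * kron l 2)

theorem weakly_einstein_not_einstein_example (c : ℝ) (hc : c ≠ 0) :
    IsACT (prodCurv c) ∧ prodCurv c 0 1 0 1 = c ∧ prodCurv c 2 3 2 3 = -c ∧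
    (¬ ∀ i j, Ric (prodCurv c) i j = scalCurv (prodCurv c) / 4 * kron i j) ∧
    (∀ i j, (∑ a, ∑ b, ∑ d, prodCurv c a b d i * prodCurv c a b d j)
      = (1 / 4) * normR2 (prodCurv c) * kron i j) := by
  refine ⟨⟨?_, ?_, ?_, ?_⟩, ?_, ?_, ?_, ?_⟩
  · intro i j k l; simp only [prodCurv]; ring
  · intro i j k l; simp only [prodCurv]; ring
  · intro i j k l; simp only [prodCurv]; ring
  · intro i j k l; simp only [prodCurv]; ring
  · simp [prodCurv, kron]
  · simp [prodCurv, kron]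
  · intro h
    have h0 := h 0 0
    have h2 := h 2 2
    simp [Ric, scalCurv, Fin.sum_univ_four, prodCurv, kron] at h0 h2
    exact hc (by linarith)
  · intro i j
    fin_cases i <;> fin_cases j <;>
      simp [Fin.sum_univ_four, normR2, prodCurv, kron] <;> ring
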